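/- Let λ be a partition of e-weight w whose label z(λ) = (z₁, ..., z_w) is 1-increasing, i.e. z_{i+1} - z_i ≥ 1 for all i. Then every component λ^{(j)} of the e-quotient of λ is a hook partition, i.e. satisfies (λ^{(j)})₂ ≤ 1. -/
import Mathlib


/-- The set of β-numbers of a partition given by its (0-indexed) parts function. -/
def betaSet (lam : ℕ → ℕ) : Set ℤ :=
  {x : ℤ | ∃ i : ℕ, x = (lam i : ℤ) - ((i : ℤ) + 1)}

/-- `wt e B b`: number of unoccupied positions above `b` on its runner. -/
noncomputable def wt (e : ℕ) (B : Set ℤ) (b : ℤ) : ℕ :=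
  Set.ncard {x : ℤ | x < b ∧ (e : ℤ) ∣ b - x ∧ x ∉ B}

/-- `(b; q)` is a bead movement: `b ∈ B`, `q = b - i·e` for some `0 ≤ i < wt e B b`. -/
def IsBM (e : ℕ) (B : Set ℤ) (b q : ℤ) : Prop :=
  b ∈ B ∧ ∃ i : ℕ, q = b - (i : ℤ) * e ∧ i < wt e B b

/-- The armlength of a bead movement starting at `q`. -/
noncomputable def zOf (e : ℕ) (B : Set ℤ) (q : ℤ) : ℕ :=
  Set.ncard {t : ℤ | q - e < t ∧ t ≤ q ∧ t ∉ B}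

/-- Every component of the `e`-quotient is a hook: on each runner there is at most one
bead of weight at least `2`. -/
def HookQuotient (e : ℕ) (B : Set ℤ) : Prop :=
  ∀ b b' : ℤ, b ∈ B → b' ∈ B → (e : ℤ) ∣ b - b' →
    2 ≤ wt e B b → 2 ≤ wt e B b' → b = b'

/-- Sufficiently small integers are β-numbers. -/
lemma betaSet_small (lam : ℕ → ℕ) (N : ℕ) (hN : ∀ i ≥ N, lam i = 0)
    (x : ℤ) (hx : x ≤ -(N : ℤ) - 1) : x ∈ betaSet lam := by
  refine ⟨(-x - 1).toNat, ?_⟩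
  have h1 : (0 : ℤ) ≤ -x - 1 := by linarith
  have h2 : ((-x - 1).toNat : ℤ) = -x - 1 := Int.toNat_of_nonneg h1
  have h3 : (-x - 1).toNat ≥ N := by omega
  rw [hN _ h3]
  push_cast [h2]
  ring

/-- Key lemma: there cannot be a bead `b` of weight at least 2 with another bead
strictly above it on the same runner. -/
lemma key (e : ℕ) (he : 2 ≤ e) (lam : ℕ → ℕ)
    (hev : ∃ N, ∀ i ≥ N, lam i = 0)
    (hinc : ∀ b q b' q' : ℤ, IsBM e (betaSet lam) b q → IsBM e (betaSet lam) b' q' →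
      (q < q' ∨ (q = q' ∧ b < b')) →
      zOf e (betaSet lam) q < zOf e (betaSet lam) q')
    (b b' : ℤ) (hb : b ∈ betaSet lam) (hb' : b' ∈ betaSet lam)
    (hlt : b < b') (hdvd : (e : ℤ) ∣ b' - b)
    (hwt : 2 ≤ wt e (betaSet lam) b) : False := by
  classical
  set B := betaSet lam with hB
  have hepos : (0 : ℤ) < (e : ℤ) := by
    have : 0 < e := by omega
    exact_mod_cast this
  obtain ⟨m, hm⟩ := hdvd
  have hmpos : 0 < m := by nlinarith
  -- the set of positive steps above b on the runner hitting a bead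
  have hPex : ∃ j : ℕ, 1 ≤ j ∧ b + (j : ℤ) * e ∈ B := by
    refine ⟨m.toNat, by omega, ?_⟩
    have hc : ((m.toNat : ℤ)) = m := by omega
    rw [hc]
    have : b + m * e = b' := by linarith [hm, mul_comm (e : ℤ) m]
    rw [this]; exact hb'
  set k := Nat.find hPex with hkdef
  obtain ⟨hk1, hkB⟩ := Nat.find_spec hPex
  have hmin : ∀ j : ℕ, 1 ≤ j → j < k → b + (j : ℤ) * e ∉ B := by
    intro j hj1 hjk hmem
    exact Nat.find_min hPex hjk ⟨hj1, hmem⟩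
  set b'' := b + (k : ℤ) * e with hb''def
  have hkpos : (0 : ℤ) < (k : ℤ) := by exact_mod_cast hk1
  have hbb'' : b < b'' := by nlinarith
  -- the gap set above b'' on its runner
  set S'' : Set ℤ := {x : ℤ | x < b'' ∧ (e : ℤ) ∣ b'' - x ∧ x ∉ B} with hS''def
  obtain ⟨N, hN⟩ := hev
  have hfin : S''.Finite := by
    apply (Set.finite_Ico (-(N : ℤ)) b'').subset
    intro x hx
    constructor
    · by_contra h
      push_neg at h
      exact hx.2.2 (betaSet_small lam N hN x (by linarith))
    · exact hx.1
  -- two gaps below b on the runner of b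
  have hSfin : ({x : ℤ | x < b ∧ (e : ℤ) ∣ b - x ∧ x ∉ B}).Finite := by
    apply Set.finite_of_ncard_ne_zero
    have : 2 ≤ Set.ncard {x : ℤ | x < b ∧ (e : ℤ) ∣ b - x ∧ x ∉ B} := hwt
    omega
  have h2card : 1 < Set.ncard {x : ℤ | x < b ∧ (e : ℤ) ∣ b - x ∧ x ∉ B} := hwt
  obtain ⟨x₁, x₂, hx₁, hx₂, hne⟩ := (Set.one_lt_ncard_iff hSfin).mp h2card
  -- the finite witness set
  set F : Finset ℤ :=
    ((Finset.Icc 1 (k - 1)).image fun j : ℕ => b + (j : ℤ) * e) ∪ {x₁, x₂} with hFdef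
  have hinj : Function.Injective (fun j : ℕ => b + (j : ℤ) * e) := by
    intro a a' h
    simp only at h
    have : (a : ℤ) * e = (a' : ℤ) * e := by linarith
    have : (a : ℤ) = a' := mul_right_cancel₀ (ne_of_gt hepos) this
    exact_mod_cast this
  have hdisj : Disjoint ((Finset.Icc 1 (k - 1)).image fun j : ℕ => b + (j : ℤ) * e)
      ({x₁, x₂} : Finset ℤ) := by
    rw [Finset.disjoint_left]
    intro a ha ha'
    simp only [Finset.mem_image, Finset.mem_Icc] at ha
    obtain ⟨j, ⟨hj1, _⟩, rfl⟩ := ha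
    have hj1' : (1 : ℤ) ≤ (j : ℤ) := by exact_mod_cast hj1
    have hge : b < b + (j : ℤ) * e := by nlinarith
    simp only [Finset.mem_insert, Finset.mem_singleton] at ha'
    rcases ha' with h | h
    · linarith [hx₁.1]
    · linarith [hx₂.1]
  have hFcard : F.card = k + 1 := by
    rw [hFdef, Finset.card_union_of_disjoint hdisj,
      Finset.card_image_of_injective _ hinj, Nat.card_Icc, Finset.card_pair hne]
    omega
  have hsub : (F : Set ℤ) ⊆ S'' := by
    intro x hx
    simp only [hFdef, Finset.coe_union, Finset.coe_image, Finset.coe_Icc,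
      Finset.coe_insert, Finset.coe_singleton, Set.mem_union, Set.mem_image,
      Set.mem_Icc, Set.mem_insert_iff, Set.mem_singleton_iff] at hx
    rcases hx with ⟨j, ⟨hj1, hjk⟩, rfl⟩ | rfl | rfl
    · have hjk' : j < k := by omega
      have hjk'' : (j : ℤ) < (k : ℤ) := by exact_mod_cast hjk'
      refine ⟨by nlinarith, ⟨(k : ℤ) - j, by ring⟩, hmin j hj1 hjk'⟩
    · exact ⟨lt_trans hx₁.1 hbb'', by
        obtain ⟨c, hc⟩ := hx₁.2.1
        exact ⟨c + k, by rw [hb''def]; linarith [hc]⟩, hx₁.2.2⟩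
    · exact ⟨lt_trans hx₂.1 hbb'', by
        obtain ⟨c, hc⟩ := hx₂.2.1
        exact ⟨c + k, by rw [hb''def]; linarith [hc]⟩, hx₂.2.2⟩
  have hkwt : k < wt e B b'' := by
    have h1 : (F : Set ℤ).ncard ≤ S''.ncard := Set.ncard_le_ncard hsub hfin
    rw [Set.ncard_coe_finset, hFcard] at h1
    have : wt e B b'' = S''.ncard := rfl
    omega
  -- the two bead movements
  have hBM1 : IsBM e B b b := ⟨hb, 0, by simp, by omega⟩
  have hBM2 : IsBM e B b'' b := ⟨hkB, k, by rw [hb''def]; ring, hkwt⟩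
  have := hinc b b b'' b hBM1 hBM2 (Or.inr ⟨rfl, hbb''⟩)
  exact lt_irrefl _ this

/-- If `z(λ)` is `1`-increasing, i.e. the armlengths are strictly increasing along the
(reverse-lexicographic) total order on bead movements, then `λ` is a hook-quotient
partition. -/
theorem stmt_6 (e : ℕ) (he : 2 ≤ e) (lam : ℕ → ℕ) (hanti : Antitone lam)
    (hev : ∃ N, ∀ i ≥ N, lam i = 0)
    (hinc : ∀ b q b' q' : ℤ, IsBM e (betaSet lam) b q → IsBM e (betaSet lam) b' q' →
      (q < q' ∨ (q = q' ∧ b < b')) →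
      zOf e (betaSet lam) q < zOf e (betaSet lam) q') :
    HookQuotient e (betaSet lam) := by
  intro b b' hb hb' hdvd hw hw'
  rcases lt_trichotomy b b' with h | h | h
  · exact absurd (key e he lam hev hinc b b' hb hb' h
      (by simpa using hdvd.neg_right) hw) (by simp)
  · exact h
  · exact absurd (key e he lam hev hinc b' b hb' hb h hdvd hw') (by simp)
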